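/- Fix a prime p and an algebraic closure Ω of ℚ_p with its unique absolute value ‖·‖ extending the p-adic absolute value. Let f be a nonzero polynomial with integer coefficients. For each integer n ≥ 1 set r'_n = ∏ f(ζ), the product over all n-th roots of unity ζ ∈ Ω with f(ζ) ≠ 0 (an empty product being 1); each r'_n is a nonzero rational number. Then lim_{n→∞} ‖r'_n‖^{1/n} = M_p(f), the p-adic Mahler measure of f. -/

import Mathlib

open Polynomial Filter Topology

/-- The product of the values of the integer polynomial `f` at those `n`-th roots of
unity in `Ω` where `f` does not vanish (an empty product being `1`). -/
noncomputable def rPrimePadic (Ω : Type) [NormedField Ω] (n : ℕ) (f : Polynomial ℤ) : Ω :=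
  letI := Classical.decEq Ω
  ((Polynomial.nthRoots n (1 : Ω)).map (fun ζ =>
    if Polynomial.eval ζ (f.map (Int.castRingHom Ω)) = 0 then 1
    else Polynomial.eval ζ (f.map (Int.castRingHom Ω)))).prod

/-- The `p`-adic Mahler measure of an integer polynomial, computed in a normed
algebraically closed field `Ω` extending `ℚ_p`. -/
noncomputable def pAdicMahlerMeasure (p : ℕ) [Fact p.Prime] (Ω : Type) [NormedField Ω]
    [Algebra ℚ_[p] Ω] (f : Polynomial ℤ) : ℝ :=
  ‖(f.map (Int.castRingHom Ω)).leadingCoeff‖ *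
    (((f.map (Int.castRingHom Ω)).roots).map (fun α => max 1 ‖α‖)).prod

namespace PadicCR
open Real IsUltrametricDist
section A


lemma multiset_prod_nonneg (s : Multiset ℝ) (h : ∀ x ∈ s, 0 ≤ x) : 0 ≤ s.prod := by
  induction s using Multiset.induction_on with
  | empty => simp
  | cons a t ih =>
    rw [Multiset.prod_cons]
    exact mul_nonneg (h a (Multiset.mem_cons_self a t))
      (ih fun x hx => h x (Multiset.mem_cons_of_mem hx))

lemma multiset_prod_le_one (s : Multiset ℝ) (h0 : ∀ x ∈ s, 0 ≤ x)
    (h1 : ∀ x ∈ s, x ≤ 1) : s.prod ≤ 1 := by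
  induction s using Multiset.induction_on with
  | empty => simp
  | cons a t ih =>
    rw [Multiset.prod_cons]
    have ht : t.prod ≤ 1 := ih (fun x hx => h0 x (Multiset.mem_cons_of_mem hx))
      (fun x hx => h1 x (Multiset.mem_cons_of_mem hx))
    have htn : 0 ≤ t.prod := multiset_prod_nonneg t
      (fun x hx => h0 x (Multiset.mem_cons_of_mem hx))
    calc a * t.prod ≤ 1 * 1 := by
          exact mul_le_mul (h1 a (Multiset.mem_cons_self a t)) ht htn zero_le_one
      _ = 1 := by ring

lemma tendsto_multiset_prod {ι : Type*} (s : Multiset ι) (u : ι → ℕ → ℝ) (L : ι → ℝ)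
    (h : ∀ a ∈ s, Tendsto (u a) atTop (𝓝 (L a))) :
    Tendsto (fun n => (s.map (fun a => u a n)).prod) atTop (𝓝 ((s.map L).prod)) := by
  induction s using Multiset.induction_on with
  | empty => simpa using tendsto_const_nhds
  | cons a t ih =>
    simp only [Multiset.map_cons, Multiset.prod_cons]
    exact (h a (Multiset.mem_cons_self a t)).mul
      (ih fun x hx => h x (Multiset.mem_cons_of_mem hx))

lemma multiset_prod_rpow {ι : Type*} (s : Multiset ι) (φ : ι → ℝ)
    (h : ∀ a ∈ s, 0 ≤ φ a) (e : ℝ) :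
    ((s.map φ).prod) ^ e = (s.map (fun a => φ a ^ e)).prod := by
  induction s using Multiset.induction_on with
  | empty => simp
  | cons a t ih =>
    simp only [Multiset.map_cons, Multiset.prod_cons]
    rw [Real.mul_rpow (h a (Multiset.mem_cons_self a t))
      (multiset_prod_nonneg _ (fun x hx => by
        obtain ⟨b, hb, rfl⟩ := Multiset.mem_map.mp hx
        exact h b (Multiset.mem_cons_of_mem hb)))]
    rw [ih fun x hx => h x (Multiset.mem_cons_of_mem hx)]

lemma tendsto_const_rpow_inv {c : ℝ} (hc : 0 < c) :
    Tendsto (fun n : ℕ => c ^ ((n : ℝ)⁻¹)) atTop (𝓝 1) := by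
  show Tendsto ((fun k ↦ c ^ k) ∘ (fun k : ℝ ↦ k⁻¹) ∘ (Nat.cast)) atTop (𝓝 1)
  exact Tendsto.comp (Continuous.tendsto' (continuous_iff_continuousAt.2
    (fun a ↦ continuousAt_const_rpow hc.ne')) 0 1 (rpow_zero c))
    <| Tendsto.comp tendsto_inv_atTop_zero tendsto_natCast_atTop_atTop

lemma tendsto_nat_rpow_inv :
    Tendsto (fun n : ℕ ↦ (n : ℝ) ^ (n : ℝ)⁻¹) atTop (𝓝 1) := by
  show Tendsto ((fun k : ℝ ↦ k ^ k⁻¹) ∘ Nat.cast) atTop (𝓝 1)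
  apply Tendsto.comp _ tendsto_natCast_atTop_atTop
  simp_rw [← one_div]
  exact tendsto_rpow_div

lemma tendsto_ratio_one (D : ℕ) {a : ℕ → ℕ}
    (hle : ∀ᶠ n : ℕ in atTop, a n ≤ n ∧ n ≤ a n + D) :
    Tendsto (fun n : ℕ => (a n : ℝ) * (n : ℝ)⁻¹) atTop (𝓝 1) := by
  have hlow : Tendsto (fun n : ℕ => 1 - (D : ℝ) * (n : ℝ)⁻¹) atTop (𝓝 1) := by
    have h := (tendsto_inv_atTop_nhds_zero_nat (𝕜 := ℝ)).const_mul (D : ℝ)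
    have h2 := Tendsto.sub (tendsto_const_nhds (x := (1:ℝ))) h
    simpa using h2
  refine tendsto_of_tendsto_of_tendsto_of_le_of_le' hlow tendsto_const_nhds ?_ ?_
  · filter_upwards [hle, eventually_ge_atTop 1] with n hn hn1
    have hnpos : (0:ℝ) < (n : ℝ) := by exact_mod_cast hn1
    have hD : (n : ℝ) - D ≤ (a n : ℝ) := by
      have := hn.2
      have : (n : ℝ) ≤ (a n : ℝ) + D := by exact_mod_cast this
      linarith
    have h1 : 1 - (D:ℝ) * (n:ℝ)⁻¹ = ((n:ℝ) - D) * (n:ℝ)⁻¹ := by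
      field_simp
    rw [h1]
    exact mul_le_mul_of_nonneg_right hD (by positivity)
  · filter_upwards [hle, eventually_ge_atTop 1] with n hn hn1
    have hnpos : (0:ℝ) < (n : ℝ) := by exact_mod_cast hn1
    have : (a n : ℝ) ≤ n := by exact_mod_cast hn.1
    calc (a n : ℝ) * (n:ℝ)⁻¹ ≤ (n:ℝ) * (n:ℝ)⁻¹ :=
          mul_le_mul_of_nonneg_right this (by positivity)
      _ = 1 := mul_inv_cancel₀ hnpos.ne'

lemma tendsto_pow_card {c : ℝ} (hc : 0 < c) (D : ℕ) {a : ℕ → ℕ}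
    (hle : ∀ᶠ n : ℕ in atTop, a n ≤ n ∧ n ≤ a n + D) :
    Tendsto (fun n : ℕ => (c ^ a n) ^ ((n : ℝ)⁻¹)) atTop (𝓝 c) := by
  have key : ∀ n : ℕ, (c ^ a n) ^ ((n : ℝ)⁻¹) = c ^ ((a n : ℝ) * (n : ℝ)⁻¹) := by
    intro n
    rw [← Real.rpow_natCast c (a n), ← Real.rpow_mul hc.le]
  simp only [key]
  have hcont : ContinuousAt (fun x : ℝ => c ^ x) 1 := continuousAt_const_rpow hc.ne'
  have := hcont.tendsto.comp (tendsto_ratio_one D hle)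
  simpa [Function.comp_def, Real.rpow_one] using this

lemma tendsto_rpow_inv_of_bounds {c : ℝ} (hc : 0 < c) {u : ℕ → ℝ}
    (h : ∀ᶠ n : ℕ in atTop, c / (n : ℝ) ≤ u n ∧ u n ≤ 1) :
    Tendsto (fun n : ℕ => u n ^ ((n : ℝ)⁻¹)) atTop (𝓝 1) := by
  have hlow : Tendsto (fun n : ℕ => (c / (n : ℝ)) ^ ((n : ℝ)⁻¹)) atTop (𝓝 1) := by
    have hev : ∀ᶠ n : ℕ in atTop,
        (c / (n : ℝ)) ^ ((n : ℝ)⁻¹) = c ^ ((n:ℝ)⁻¹) / ((n:ℝ)) ^ ((n:ℝ)⁻¹) := by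
      filter_upwards [eventually_ge_atTop 1] with n hn
      have : (0:ℝ) ≤ (n:ℝ) := by positivity
      rw [Real.div_rpow hc.le this]
    have := (tendsto_const_rpow_inv hc).div tendsto_nat_rpow_inv one_ne_zero
    rw [tendsto_congr' hev]
    simpa [Pi.div_def] using this
  refine tendsto_of_tendsto_of_tendsto_of_le_of_le' hlow tendsto_const_nhds ?_ ?_
  · filter_upwards [h, eventually_ge_atTop 1] with n hn hn1
    exact Real.rpow_le_rpow (by positivity) hn.1 (by positivity)
  · filter_upwards [h, eventually_ge_atTop 1] with n hn hn1
    have h0 : 0 ≤ u n := le_trans (by positivity) hn.1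
    exact Real.rpow_le_one h0 hn.2 (by positivity)


end A
section B


variable {Ω : Type} [NormedField Ω] [IsUltrametricDist Ω]

lemma norm_sub_le_max' (a b : Ω) : ‖a - b‖ ≤ max ‖a‖ ‖b‖ := by
  rw [sub_eq_add_neg]
  simpa using norm_add_le_max a (-b)

lemma norm_sub_eq_max' {a b : Ω} (h : ‖a‖ ≠ ‖b‖) : ‖a - b‖ = max ‖a‖ ‖b‖ := by
  rw [sub_eq_add_neg, norm_add_eq_max_of_norm_ne_norm (by rwa [norm_neg]), norm_neg]

omit [IsUltrametricDist Ω] in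
lemma norm_eq_one_of_pow_eq_one {ζ : Ω} {n : ℕ} (hn : n ≠ 0) (h : ζ ^ n = 1) : ‖ζ‖ = 1 := by
  have h1 : ‖ζ‖ ^ n = 1 := by rw [← norm_pow, h, norm_one]
  rcases lt_trichotomy ‖ζ‖ 1 with hlt | heq | hgt
  · have := pow_lt_one₀ (norm_nonneg ζ) hlt hn
    simp [h1] at this
  · exact heq
  · have := one_lt_pow₀ hgt hn
    simp [h1] at this

lemma norm_pow_sub_one_le {x : Ω} (hx : ‖x‖ ≤ 1) (q : ℕ) : ‖x ^ q - 1‖ ≤ ‖x - 1‖ := by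
  induction q with
  | zero => simp
  | succ q ih =>
    have hxq : ‖x ^ q‖ ≤ 1 := by
      rw [norm_pow]; exact pow_le_one₀ (norm_nonneg x) hx
    have hid : x ^ (q + 1) - 1 = x ^ q * (x - 1) + (x ^ q - 1) := by ring
    rw [hid]
    refine (norm_add_le_max _ _).trans (max_le ?_ ih)
    rw [norm_mul]
    exact mul_le_of_le_one_left (norm_nonneg _) hxq

/-- Binomial expansion tail control: `(1+β)^k = 1 + k β + s` with `‖s‖ ≤ ‖β‖²`. -/
lemma pow_one_add_eq {β : Ω} (hβ : ‖β‖ ≤ 1) {k : ℕ} (hk : k ≠ 0) :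
    ∃ s : Ω, (1 + β) ^ k = 1 + (k : Ω) * β + s ∧ ‖s‖ ≤ ‖β‖ ^ 2 := by
  classical
  have hbin : (1 + β) ^ k = ∑ j ∈ Finset.range (k + 1), β ^ j * (k.choose j : Ω) := by
    rw [add_comm (1:Ω) β, add_pow]
    simp
  set s : Ω := ∑ j ∈ Finset.Ico 2 (k + 1), β ^ j * (k.choose j : Ω) with hs
  refine ⟨s, ?_, ?_⟩
  · rw [hbin, Finset.range_eq_Ico,
      Finset.sum_eq_sum_Ico_succ_bot (by omega : 0 < k + 1),
      Finset.sum_eq_sum_Ico_succ_bot (by omega : 1 < k + 1)]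
    simp [hs]
    ring
  · refine norm_sum_le_of_forall_le_of_nonneg (by positivity) ?_
    intro j hj
    rw [Finset.mem_Ico] at hj
    rw [norm_mul, norm_pow]
    calc ‖β‖ ^ j * ‖(k.choose j : Ω)‖ ≤ ‖β‖ ^ j * 1 := by
          exact mul_le_mul_of_nonneg_left (norm_natCast_le_one Ω _) (by positivity)
      _ = ‖β‖ ^ j := mul_one _
      _ ≤ ‖β‖ ^ 2 := pow_le_pow_of_le_one (norm_nonneg β) hβ hj.1

/-- `‖(1+β)^k - 1‖ = ‖β‖` when `‖β‖ < 1` and `‖k‖ = 1`. -/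
lemma norm_pow_one_add_sub_one_of_unit {β : Ω} (hβ : ‖β‖ < 1) {k : ℕ}
    (hk : ‖(k : Ω)‖ = 1) : ‖(1 + β) ^ k - 1‖ = ‖β‖ := by
  have hk0 : k ≠ 0 := by
    rintro rfl; simp at hk
  rcases eq_or_ne β 0 with rfl | hβ0
  · simp
  obtain ⟨s, heq, hsle⟩ := pow_one_add_eq hβ.le hk0
  have hkb : ‖(k : Ω) * β‖ = ‖β‖ := by rw [norm_mul, hk, one_mul]
  have hslt : ‖s‖ < ‖(k : Ω) * β‖ := by
    rw [hkb]
    calc ‖s‖ ≤ ‖β‖ ^ 2 := hsle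
      _ < ‖β‖ := by
          have h0 : 0 < ‖β‖ := norm_pos_iff.mpr hβ0
          nlinarith
  have : (1 + β) ^ k - 1 = (k : Ω) * β + s := by rw [heq]; ring
  rw [this]
  rw [norm_add_eq_max_of_norm_ne_norm (ne_of_gt hslt), max_eq_left hslt.le, hkb]

variable {p : ℕ}

/-- One `p`-power step: if `‖β‖ ≤ p⁻²` then `‖(1+β)^p - 1‖ = p⁻¹ ‖β‖`. -/
lemma norm_pow_one_add_sub_one_p (hp : p.Prime) (hpn : ‖(p : Ω)‖ = (p : ℝ)⁻¹)
    {β : Ω} (hβ : ‖β‖ ≤ ((p : ℝ) ^ 2)⁻¹) :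
    ‖(1 + β) ^ p - 1‖ = (p : ℝ)⁻¹ * ‖β‖ := by
  have hp1 : (1 : ℝ) < (p : ℝ) := by exact_mod_cast hp.one_lt
  have hppos : (0 : ℝ) < (p : ℝ) := by positivity
  have hβ1 : ‖β‖ ≤ 1 := hβ.trans (by
    rw [inv_le_one_iff₀]; right; nlinarith)
  rcases eq_or_ne β 0 with rfl | hβ0
  · simp
  have hb0 : 0 < ‖β‖ := norm_pos_iff.mpr hβ0
  obtain ⟨s, heq, hsle⟩ := pow_one_add_eq hβ1 hp.ne_zero
  have hkb : ‖(p : Ω) * β‖ = (p : ℝ)⁻¹ * ‖β‖ := by rw [norm_mul, hpn]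
  have hslt : ‖s‖ < ‖(p : Ω) * β‖ := by
    rw [hkb]
    calc ‖s‖ ≤ ‖β‖ ^ 2 := hsle
      _ = ‖β‖ * ‖β‖ := sq ‖β‖
      _ ≤ ((p:ℝ)^2)⁻¹ * ‖β‖ := by nlinarith
      _ < (p:ℝ)⁻¹ * ‖β‖ := by
          have : ((p:ℝ)^2)⁻¹ < (p:ℝ)⁻¹ := by
            rw [inv_lt_inv₀ (by positivity) hppos]
            nlinarith
          nlinarith
  have hid : (1 + β) ^ p - 1 = (p : Ω) * β + s := by rw [heq]; ring
  rw [hid]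
  rw [norm_add_eq_max_of_norm_ne_norm (ne_of_gt hslt), max_eq_left hslt.le, hkb]

lemma norm_pow_one_add_sub_one_ppow (hp : p.Prime) (hpn : ‖(p : Ω)‖ = (p : ℝ)⁻¹)
    {β : Ω} (hβ : ‖β‖ ≤ ((p : ℝ) ^ 2)⁻¹) (v : ℕ) :
    ‖(1 + β) ^ (p ^ v) - 1‖ = ((p : ℝ)⁻¹) ^ v * ‖β‖ := by
  have hp1 : (1 : ℝ) < (p : ℝ) := by exact_mod_cast hp.one_lt
  induction v with
  | zero => simp
  | succ v ih =>
    set γ := (1 + β) ^ (p ^ v) - 1 with hγ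
    have hγeq : (1 + β) ^ (p ^ (v + 1)) = (1 + γ) ^ p := by
      rw [pow_succ, pow_mul]
      congr 1
      rw [hγ]; ring
    have hγn : ‖γ‖ = ((p : ℝ)⁻¹) ^ v * ‖β‖ := ih
    have hγle : ‖γ‖ ≤ ((p : ℝ) ^ 2)⁻¹ := by
      rw [hγn]
      calc ((p : ℝ)⁻¹) ^ v * ‖β‖ ≤ 1 * ‖β‖ := by
            apply mul_le_mul_of_nonneg_right _ (norm_nonneg β)
            exact pow_le_one₀ (by positivity) (by
              rw [inv_le_one_iff₀]; right; linarith)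
        _ = ‖β‖ := one_mul _
        _ ≤ _ := hβ
    rw [hγeq, norm_pow_one_add_sub_one_p hp hpn hγle, hγn, pow_succ]
    ring

/-- Main binomial norm computation: `‖(1+β)^k - 1‖ = ‖k‖ ‖β‖` for `‖β‖ ≤ p⁻²`. -/
lemma norm_pow_one_add_sub_one (hp : p.Prime) (hpn : ‖(p : Ω)‖ = (p : ℝ)⁻¹)
    (hnp : ∀ k : ℕ, ¬ p ∣ k → ‖(k : Ω)‖ = 1)
    {β : Ω} (hβ : ‖β‖ ≤ ((p : ℝ) ^ 2)⁻¹) {k : ℕ} (hk : k ≠ 0) :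
    ‖(1 + β) ^ k - 1‖ = ‖(k : Ω)‖ * ‖β‖ := by
  have hp1 : (1 : ℝ) < (p : ℝ) := by exact_mod_cast hp.one_lt
  set v := k.factorization p with hv
  set u := ordCompl[p] k with hu
  have hfac : p ^ v * u = k := Nat.ordProj_mul_ordCompl_eq_self k p
  have hund : ¬ p ∣ u := Nat.not_dvd_ordCompl hp hk
  have hun : ‖(u : Ω)‖ = 1 := hnp u hund
  set γ := (1 + β) ^ (p ^ v) - 1 with hγ
  have hγn : ‖γ‖ = ((p : ℝ)⁻¹) ^ v * ‖β‖ := norm_pow_one_add_sub_one_ppow hp hpn hβ v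
  have hγlt : ‖γ‖ < 1 := by
    rw [hγn]
    have h1 : ((p : ℝ)⁻¹) ^ v ≤ 1 := pow_le_one₀ (by positivity) (by
      rw [inv_le_one_iff₀]; right; linarith)
    have h2 : ‖β‖ < 1 := lt_of_le_of_lt hβ (by
      rw [inv_lt_one_iff₀]; right; nlinarith)
    calc ((p : ℝ)⁻¹) ^ v * ‖β‖ ≤ 1 * ‖β‖ :=
          mul_le_mul_of_nonneg_right h1 (norm_nonneg β)
      _ = ‖β‖ := one_mul _
      _ < 1 := h2
  have hkey : (1 + β) ^ k = (1 + γ) ^ u := by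
    rw [← hfac, pow_mul]
    congr 1
    rw [hγ]; ring
  have hknorm : ‖(k : Ω)‖ = ((p : ℝ)⁻¹) ^ v := by
    rw [← hfac]
    push_cast
    rw [norm_mul, norm_pow, hpn, hun, mul_one]
  rw [hkey, norm_pow_one_add_sub_one_of_unit hγlt hun, hγn, hknorm]

/-- The key analytic lower bound: for `α` of norm one which is not a root of unity,
`‖α^n - 1‖ ≥ c / n`. -/
lemma exists_lower_bound (hp : p.Prime) (hpn : ‖(p : Ω)‖ = (p : ℝ)⁻¹)
    (hnp : ∀ k : ℕ, ¬ p ∣ k → ‖(k : Ω)‖ = 1)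
    (knorm_ge : ∀ k : ℕ, k ≠ 0 → ((k : ℝ))⁻¹ ≤ ‖(k : Ω)‖)
    {α : Ω} (hα : ‖α‖ = 1) (hnr : ∀ k : ℕ, k ≠ 0 → α ^ k ≠ 1) :
    ∃ c : ℝ, 0 < c ∧ ∀ n : ℕ, n ≠ 0 → c / (n : ℝ) ≤ ‖α ^ n - 1‖ := by
  classical
  have hp1 : (1 : ℝ) < (p : ℝ) := by exact_mod_cast hp.one_lt
  set c₀ : ℝ := ((p : ℝ) ^ 2)⁻¹ with hc₀
  have hc₀pos : 0 < c₀ := by positivity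
  by_cases h : ∃ k : ℕ, (k ≠ 0 ∧ ‖α ^ k - 1‖ ≤ c₀)
  · set m := Nat.find h with hm
    obtain ⟨hm0, hmle⟩ : m ≠ 0 ∧ ‖α ^ m - 1‖ ≤ c₀ := Nat.find_spec h
    set β := α ^ m - 1 with hβdef
    have hαm : α ^ m = 1 + β := by rw [hβdef]; ring
    have hβ0 : β ≠ 0 := sub_ne_zero.mpr (hnr m hm0)
    have hβpos : 0 < ‖β‖ := norm_pos_iff.mpr hβ0
    refine ⟨min c₀ ‖β‖, lt_min hc₀pos hβpos, ?_⟩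
    intro n hn0
    have hnpos : (0:ℝ) < (n:ℝ) := by exact_mod_cast Nat.pos_of_ne_zero hn0
    by_cases hd : ‖α ^ n - 1‖ ≤ c₀
    · -- then m ∣ n
      set q := n / m with hq
      set r := n % m with hr
      have hnqr : m * q + r = n := Nat.div_add_mod n m
      have hαnorm : ∀ j : ℕ, ‖α ^ j‖ = 1 := fun j => by rw [norm_pow, hα, one_pow]
      have hqm : ‖α ^ (m * q) - 1‖ ≤ c₀ := by
        rw [pow_mul]
        exact (norm_pow_sub_one_le (le_of_eq (hαnorm m)) q).trans hmle
      have hrle : ‖α ^ r - 1‖ ≤ c₀ := by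
        have hid : α ^ (m * q) * (α ^ r - 1) = (α ^ n - 1) - (α ^ (m * q) - 1) := by
          rw [← hnqr, pow_add]; ring
        have : ‖α ^ r - 1‖ = ‖α ^ (m * q) * (α ^ r - 1)‖ := by
          rw [norm_mul, hαnorm, one_mul]
        rw [this, hid]
        exact (norm_sub_le_max' _ _).trans (max_le hd hqm)
      have hr0 : r = 0 := by
        by_contra hr0
        have hrlt : r < m := Nat.mod_lt n (Nat.pos_of_ne_zero hm0)
        exact Nat.find_min h hrlt ⟨hr0, hrle⟩
      have hq0 : q ≠ 0 := by
        intro hq0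
        apply hn0
        have h2 := hnqr
        rw [hq0, hr0] at h2
        simpa using h2.symm
      have hqn : q ≤ n :=
        calc q ≤ m * q := Nat.le_mul_of_pos_left q (Nat.pos_of_ne_zero hm0)
          _ ≤ n := Nat.le.intro hnqr
      have hkey : ‖α ^ n - 1‖ = ‖(q : Ω)‖ * ‖β‖ := by
        have : α ^ n = (1 + β) ^ q := by
          rw [← hαm, ← pow_mul, ← hnqr, hr0, add_zero]
        rw [this]
        exact norm_pow_one_add_sub_one hp hpn hnp hmle hq0
      have hq1 : ((q:ℝ))⁻¹ ≤ ‖(q : Ω)‖ := knorm_ge q hq0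
      have hqrpos : (0:ℝ) < (q:ℝ) := by exact_mod_cast Nat.pos_of_ne_zero hq0
      calc min c₀ ‖β‖ / n ≤ ‖β‖ / n := by
            gcongr
            exact min_le_right _ _
          _ ≤ ‖β‖ / q := by
            have hqn' : (q:ℝ) ≤ (n:ℝ) := by exact_mod_cast hqn
            gcongr
          _ ≤ ‖(q : Ω)‖ * ‖β‖ := by
            rw [div_eq_mul_inv, mul_comm]
            exact mul_le_mul_of_nonneg_right hq1 (norm_nonneg β)
          _ = ‖α ^ n - 1‖ := hkey.symm
    · push_neg at hd
      have h1 : (1:ℝ) ≤ (n:ℝ) := by exact_mod_cast Nat.one_le_iff_ne_zero.mpr hn0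
      calc min c₀ ‖β‖ / n ≤ c₀ / n := by
            gcongr
            exact min_le_left _ _
          _ ≤ c₀ := by
            rw [div_le_iff₀ hnpos]
            nlinarith [hc₀pos.le]
          _ ≤ ‖α ^ n - 1‖ := hd.le
  · push_neg at h
    refine ⟨c₀, hc₀pos, fun n hn0 => ?_⟩
    have hnpos : (0:ℝ) < (n:ℝ) := by exact_mod_cast Nat.pos_of_ne_zero hn0
    have h1 : c₀ / n ≤ c₀ := by
      rw [div_le_iff₀ hnpos]
      nlinarith [hc₀pos.le, (by exact_mod_cast Nat.one_le_iff_ne_zero.mpr hn0 : (1:ℝ) ≤ (n:ℝ))]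
    exact h1.trans (h n hn0).le


end B
section C


variable {Ω : Type} [NormedField Ω]

lemma norm_multiset_prod' (s : Multiset Ω) :
    ‖s.prod‖ = (s.map (fun x : Ω => ‖x‖)).prod := by
  induction s using Multiset.induction_on with
  | empty => simp
  | cons a t ih => simp [norm_mul, ih]

variable [CharZero Ω] [IsAlgClosed Ω]

lemma T_card {n : ℕ} (hn : n ≠ 0) : Multiset.card (nthRoots n (1 : Ω)) = n := by
  have h : Multiset.card ((X ^ n - C (1:Ω)).roots) = (X ^ n - C (1:Ω)).natDegree :=
    splits_iff_card_roots.mp (IsAlgClosed.splits _)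
  rw [natDegree_X_pow_sub_C] at h
  simpa [nthRoots] using h

lemma T_nodup {n : ℕ} (hn : n ≠ 0) : (nthRoots n (1 : Ω)).Nodup := by
  unfold nthRoots
  apply nodup_roots
  exact separable_X_pow_sub_C (1:Ω) (by exact_mod_cast Nat.cast_ne_zero.mpr hn) one_ne_zero

lemma T_prod {n : ℕ} (hn : n ≠ 0) :
    ((nthRoots n (1 : Ω)).map (fun ζ => X - C ζ)).prod = X ^ n - C (1 : Ω) := by
  have hm : (X ^ n - C (1:Ω)).Monic := monic_X_pow_sub_C _ hn
  have hcard : Multiset.card (X ^ n - C (1:Ω)).roots = (X ^ n - C (1:Ω)).natDegree := by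
    rw [natDegree_X_pow_sub_C]
    exact T_card hn
  exact prod_multiset_X_sub_C_of_monic_of_roots_card_eq hm hcard

lemma prod_T_norm {n : ℕ} (hn : n ≠ 0) (α : Ω) :
    ((nthRoots n (1 : Ω)).map (fun ζ => ‖ζ - α‖)).prod = ‖α ^ n - 1‖ := by
  have h1 : α ^ n - 1 = eval α ((X : Polynomial Ω) ^ n - C 1) := by simp
  rw [h1, ← T_prod hn, eval_multiset_prod, norm_multiset_prod', Multiset.map_map,
    Multiset.map_map]
  congr 1
  apply Multiset.map_congr rfl
  intro ζ hζ
  simp [Function.comp, norm_sub_rev]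

lemma prod_T_erase_norm [DecidableEq Ω] {n : ℕ} (hn : n ≠ 0) {α : Ω}
    (hα : α ∈ nthRoots n (1:Ω)) :
    (((nthRoots n (1 : Ω)).erase α).map (fun ζ => ‖ζ - α‖)).prod
      = ‖(n : Ω)‖ * ‖α‖ ^ (n - 1) := by
  have h1 : eval α (derivative (((nthRoots n (1:Ω)).map (fun ζ => X - C ζ)).prod))
      = (((nthRoots n (1:Ω)).erase α).map (fun a => α - a)).prod :=
    eval_multiset_prod_X_sub_C_derivative hα
  rw [T_prod hn] at h1
  have h2 : derivative ((X : Polynomial Ω) ^ n - C 1) = C (n : Ω) * X ^ (n - 1) := by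
    rw [derivative_sub, derivative_C, sub_zero, derivative_X_pow]
  rw [h2] at h1
  have h3 : ‖(n:Ω)‖ * ‖α‖ ^ (n-1)
      = ((((nthRoots n (1:Ω)).erase α).map (fun a => α - a)).map (fun x : Ω => ‖x‖)).prod := by
    rw [← norm_multiset_prod', ← h1]
    simp [norm_mul, norm_pow]
  rw [h3, Multiset.map_map]
  congr 1
  apply Multiset.map_congr rfl
  intro ζ hζ
  simp [Function.comp, norm_sub_rev]


end C
section D
lemma prod_map_ite {α : Type} {M : Type} [CommMonoid M] (s : Multiset α) (P : α → Prop)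
    [DecidablePred P] (g : α → M) :
    (s.map (fun a => if P a then 1 else g a)).prod
      = ((s.filter (fun a => ¬ P a)).map g).prod := by
  induction s using Multiset.induction_on with
  | empty => simp
  | cons a t ih =>
    by_cases h : P a <;>
      simp [Multiset.filter_cons, h, ih, Multiset.map_cons, Multiset.prod_cons]

lemma filter_not_card {α : Type} (s : Multiset α) (P : α → Prop) [DecidablePred P] :
    Multiset.card (s.filter (fun a => ¬ P a)) + Multiset.card (s.filter P)
      = Multiset.card s := by
  induction s using Multiset.induction_on with
  | empty => simp
  | cons a t ih =>
    by_cases h : P a <;> simp [Multiset.filter_cons, h] <;> omega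

lemma prod_filter_ge {α : Type} (s : Multiset α) (P : α → Prop) [DecidablePred P]
    (g : α → ℝ) (h0 : ∀ a ∈ s, 0 ≤ g a) (h1 : ∀ a ∈ s, P a → g a ≤ 1) :
    (s.map g).prod ≤ ((s.filter (fun a => ¬ P a)).map g).prod := by
  induction s using Multiset.induction_on with
  | empty => simp
  | cons a t ih =>
    have h0t : ∀ x ∈ t, 0 ≤ g x := fun x hx => h0 x (Multiset.mem_cons_of_mem hx)
    have h1t : ∀ x ∈ t, P x → g x ≤ 1 := fun x hx => h1 x (Multiset.mem_cons_of_mem hx)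
    have iht := ih h0t h1t
    have htn : 0 ≤ (t.map g).prod :=
      multiset_prod_nonneg _ (fun x hx => by
        obtain ⟨b, hb, rfl⟩ := Multiset.mem_map.mp hx; exact h0t b hb)
    by_cases h : P a
    · rw [Multiset.map_cons, Multiset.prod_cons, Multiset.filter_cons_of_neg _ (by simpa using h)]
      calc g a * (t.map g).prod ≤ 1 * (t.map g).prod :=
            mul_le_mul_of_nonneg_right (h1 a (Multiset.mem_cons_self a t) h) htn
        _ = (t.map g).prod := one_mul _
        _ ≤ _ := iht
    · rw [Multiset.map_cons, Multiset.prod_cons, Multiset.filter_cons_of_pos _ (by simpa using h),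
        Multiset.map_cons, Multiset.prod_cons]
      exact mul_le_mul_of_nonneg_left iht (h0 a (Multiset.mem_cons_self a t))

lemma per_root_tendsto {Ω : Type} [NormedField Ω] [IsUltrametricDist Ω] [CharZero Ω]
    [IsAlgClosed Ω] [DecidableEq Ω] {p : ℕ} (hp : p.Prime)
    (hpn : ‖(p : Ω)‖ = (p : ℝ)⁻¹) (hnp : ∀ k : ℕ, ¬ p ∣ k → ‖(k : Ω)‖ = 1)
    (knorm_ge : ∀ k : ℕ, k ≠ 0 → ((k : ℝ))⁻¹ ≤ ‖(k : Ω)‖)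
    (F : Polynomial Ω) (hF0 : F ≠ 0)
    [dp : DecidablePred fun ζ : Ω => eval ζ F = 0]
    {α : Ω} (hαR : α ∈ F.roots) :
    Tendsto (fun n : ℕ =>
      (((nthRoots n (1:Ω)).filter (fun ζ => ¬ eval ζ F = 0)).map
        (fun ζ => ‖ζ - α‖)).prod ^ ((n:ℝ)⁻¹)) atTop (𝓝 (max 1 ‖α‖)) := by
  set g : Ω → ℝ := fun ζ => ‖ζ - α‖ with hg
  set S : ℕ → Multiset Ω :=
    fun n => (nthRoots n (1:Ω)).filter (fun ζ => ¬ eval ζ F = 0) with hSdef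
  have hmem : ∀ {n : ℕ}, n ≠ 0 → ∀ {ζ : Ω}, ζ ∈ S n → ζ ^ n = 1 ∧ ‖ζ‖ = 1 := by
    intro n hn ζ hζ
    have h1 : ζ ∈ nthRoots n (1:Ω) := Multiset.mem_of_mem_filter hζ
    have h2 : ζ ^ n = 1 := (mem_nthRoots (Nat.pos_of_ne_zero hn)).mp h1
    exact ⟨h2, norm_eq_one_of_pow_eq_one hn h2⟩
  have hroot : eval α F = 0 := by
    have := Polynomial.mem_roots'.mp hαR
    exact this.2
  have hcards : ∀ᶠ n : ℕ in atTop,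
      Multiset.card (S n) ≤ n ∧ n ≤ Multiset.card (S n) + F.roots.toFinset.card := by
    filter_upwards [eventually_ge_atTop 1] with n hn1
    have hn : n ≠ 0 := by omega
    constructor
    · calc Multiset.card (S n) ≤ Multiset.card (nthRoots n (1:Ω)) :=
            Multiset.card_le_card (Multiset.filter_le _ _)
        _ = n := T_card hn
    · have hE : Multiset.card ((nthRoots n (1:Ω)).filter (fun ζ => eval ζ F = 0))
          ≤ F.roots.toFinset.card := by
        set E := (nthRoots n (1:Ω)).filter (fun ζ => eval ζ F = 0) with hEdef
        have hnodupE : E.Nodup := (T_nodup hn).filter _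
        have hsub : E.toFinset ⊆ F.roots.toFinset := by
          intro x hx
          rw [Multiset.mem_toFinset] at hx ⊢
          have hx0 : eval x F = 0 := by
            have := Multiset.mem_filter.mp hx
            exact this.2
          exact Polynomial.mem_roots'.mpr ⟨hF0, hx0⟩
        calc Multiset.card E = E.toFinset.card :=
              (Multiset.toFinset_card_of_nodup hnodupE).symm
          _ ≤ _ := Finset.card_le_card hsub
      have hsum := filter_not_card (nthRoots n (1:Ω)) (fun ζ => eval ζ F = 0)
      rw [T_card hn] at hsum
      have hScard : Multiset.card (S n)
          = Multiset.card ((nthRoots n (1:Ω)).filter (fun a => ¬ eval a F = 0)) := rfl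
      omega
  have hSnonneg : ∀ n : ℕ, 0 ≤ ((S n).map g).prod := fun n =>
    multiset_prod_nonneg _ (fun x hx => by
      obtain ⟨b, hb, rfl⟩ := Multiset.mem_map.mp hx; exact norm_nonneg _)
  rcases lt_trichotomy ‖α‖ 1 with hlt | heq | hgt
  · -- ‖α‖ < 1
    have h1 : max 1 ‖α‖ = 1 := max_eq_left hlt.le
    rw [h1]
    have hev : (fun n : ℕ => ((S n).map g).prod ^ ((n:ℝ)⁻¹)) =ᶠ[atTop] (fun _ => (1:ℝ)) := by
      filter_upwards [eventually_ge_atTop 1] with n hn1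
      have hn : n ≠ 0 := by omega
      have hp1 : ((S n).map g).prod = 1 := by
        apply Multiset.prod_eq_one
        intro x hx
        obtain ⟨ζ, hζ, rfl⟩ := Multiset.mem_map.mp hx
        have hζ1 := (hmem hn hζ).2
        show ‖ζ - α‖ = 1
        rw [norm_sub_eq_max' (by rw [hζ1]; exact ne_of_gt hlt), hζ1,
          max_eq_left hlt.le]
      rw [hp1, Real.one_rpow]
    rw [tendsto_congr' hev]
    exact tendsto_const_nhds
  · -- ‖α‖ = 1 : the hard case
    have h1 : max 1 ‖α‖ = 1 := by rw [heq]; exact max_self 1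
    rw [h1]
    have hfac_le_one : ∀ {n : ℕ}, n ≠ 0 → ∀ {a : Ω}, a ∈ nthRoots n (1:Ω) → ‖a - α‖ ≤ 1 := by
      intro n hn a ha
      have hano : ‖a‖ = 1 := norm_eq_one_of_pow_eq_one hn
        ((mem_nthRoots (Nat.pos_of_ne_zero hn)).mp ha)
      calc ‖a - α‖ ≤ max ‖a‖ ‖α‖ := norm_sub_le_max' _ _
        _ = 1 := by rw [hano, heq, max_self]
    have hkeyA : ∀ n : ℕ, n ≠ 0 → ‖α ^ n - 1‖ ≤ ((S n).map g).prod := by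
      intro n hn
      have hcomp := prod_filter_ge (nthRoots n (1:Ω)) (fun ζ => eval ζ F = 0) g
        (fun a _ => norm_nonneg _) (fun a ha _ => hfac_le_one hn ha)
      calc ‖α ^ n - 1‖ = ((nthRoots n (1:Ω)).map g).prod := (prod_T_norm hn α).symm
        _ ≤ _ := hcomp
    have hkeyB : ∀ n : ℕ, n ≠ 0 → α ^ n = 1 → ‖(n : Ω)‖ ≤ ((S n).map g).prod := by
      intro n hn hαn
      have hαT : α ∈ nthRoots n (1:Ω) := (mem_nthRoots (Nat.pos_of_ne_zero hn)).mpr hαn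
      have hSe : S n = ((nthRoots n (1:Ω)).erase α).filter (fun ζ => ¬ eval ζ F = 0) := by
        show Multiset.filter _ (nthRoots n (1:Ω)) = _
        conv_lhs => rw [← Multiset.cons_erase hαT]
        rw [Multiset.filter_cons_of_neg]
        simpa using hroot
      have hcomp := prod_filter_ge ((nthRoots n (1:Ω)).erase α) (fun ζ => eval ζ F = 0) g
        (fun a _ => norm_nonneg _)
        (fun a ha _ => hfac_le_one hn (Multiset.mem_of_mem_erase ha))
      calc ‖(n : Ω)‖ = ‖(n : Ω)‖ * ‖α‖ ^ (n - 1) := by rw [heq, one_pow, mul_one]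
        _ = (((nthRoots n (1:Ω)).erase α).map g).prod := (prod_T_erase_norm hn hαT).symm
        _ ≤ _ := by rw [hSe]; exact hcomp
    obtain ⟨c, hcpos, hc1, hclower⟩ :
        ∃ c : ℝ, 0 < c ∧ c ≤ 1 ∧ ∀ n : ℕ, n ≠ 0 → c / (n : ℝ) ≤ ((S n).map g).prod := by
      by_cases hrou : ∃ k : ℕ, k ≠ 0 ∧ α ^ k = 1
      · set m := Nat.find hrou with hmdef
        obtain ⟨hm0, hm1⟩ : m ≠ 0 ∧ α ^ m = 1 := Nat.find_spec hrou
        set c₁ : ℝ := ∏ j ∈ Finset.Ico 1 m, ‖α ^ j - 1‖ with hc₁def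
        have hfacpos : ∀ j ∈ Finset.Ico 1 m, 0 < ‖α ^ j - 1‖ := by
          intro j hj
          rw [Finset.mem_Ico] at hj
          have hj0 : j ≠ 0 := by omega
          have : α ^ j ≠ 1 := by
            intro hcon
            exact Nat.find_min hrou hj.2 ⟨hj0, hcon⟩
          simpa [norm_pos_iff, sub_ne_zero] using this
        have hfacle1 : ∀ j ∈ Finset.Ico 1 m, ‖α ^ j - 1‖ ≤ 1 := by
          intro j hj
          have hαj : ‖α ^ j‖ = 1 := by rw [norm_pow, heq, one_pow]
          calc ‖α ^ j - 1‖ ≤ max ‖α ^ j‖ ‖(1:Ω)‖ := norm_sub_le_max' _ _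
            _ = 1 := by rw [hαj, norm_one, max_self]
        have hc₁pos : 0 < c₁ := Finset.prod_pos hfacpos
        have hc₁le1 : c₁ ≤ 1 := Finset.prod_le_one (fun j hj => (hfacpos j hj).le) hfacle1
        refine ⟨min c₁ 1, lt_min hc₁pos zero_lt_one, min_le_right _ _, ?_⟩
        intro n hn
        have hnpos : (0:ℝ) < (n:ℝ) := by exact_mod_cast Nat.pos_of_ne_zero hn
        by_cases hαn : α ^ n = 1
        · calc min c₁ 1 / (n:ℝ) ≤ 1 / (n:ℝ) := by gcongr; exact min_le_right _ _
            _ = ((n:ℝ))⁻¹ := one_div _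
            _ ≤ ‖(n : Ω)‖ := knorm_ge n hn
            _ ≤ _ := hkeyB n hn hαn
        · set r := n % m with hrdef
          have hnr : α ^ n = α ^ r := by
            conv_lhs => rw [← Nat.div_add_mod n m]
            rw [pow_add, pow_mul, hm1, one_pow, one_mul]
          have hr0 : r ≠ 0 := by
            intro hcon
            apply hαn
            rw [hnr, hcon, pow_zero]
          have hrlt : r < m := Nat.mod_lt n (Nat.pos_of_ne_zero hm0)
          have hrmem : r ∈ Finset.Ico 1 m := by
            rw [Finset.mem_Ico]
            omega
          have hc₁r : c₁ ≤ ‖α ^ r - 1‖ := by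
            rw [hc₁def, ← Finset.mul_prod_erase _ _ hrmem]
            have hrest : (∏ j ∈ (Finset.Ico 1 m).erase r, ‖α ^ j - 1‖) ≤ 1 :=
              Finset.prod_le_one
                (fun j hj => (hfacpos j (Finset.mem_of_mem_erase hj)).le)
                (fun j hj => hfacle1 j (Finset.mem_of_mem_erase hj))
            calc ‖α ^ r - 1‖ * _ ≤ ‖α ^ r - 1‖ * 1 :=
                  mul_le_mul_of_nonneg_left hrest (norm_nonneg _)
              _ = ‖α ^ r - 1‖ := mul_one _
          calc min c₁ 1 / (n:ℝ) ≤ c₁ / (n:ℝ) := by gcongr; exact min_le_left _ _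
            _ ≤ c₁ := by
                rw [div_le_iff₀ hnpos]
                have : (1:ℝ) ≤ (n:ℝ) := by exact_mod_cast Nat.one_le_iff_ne_zero.mpr hn
                nlinarith [hc₁pos.le]
            _ ≤ ‖α ^ r - 1‖ := hc₁r
            _ = ‖α ^ n - 1‖ := by rw [hnr]
            _ ≤ _ := hkeyA n hn
      · push_neg at hrou
        obtain ⟨c, hcpos, hcball⟩ := exists_lower_bound hp hpn hnp knorm_ge heq hrou
        refine ⟨min c 1, lt_min hcpos zero_lt_one, min_le_right _ _, ?_⟩
        intro n hn
        have hnpos : (0:ℝ) < (n:ℝ) := by exact_mod_cast Nat.pos_of_ne_zero hn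
        calc min c 1 / (n:ℝ) ≤ c / (n:ℝ) := by gcongr; exact min_le_left _ _
          _ ≤ ‖α ^ n - 1‖ := hcball n hn
          _ ≤ _ := hkeyA n hn
    apply tendsto_rpow_inv_of_bounds hcpos
    filter_upwards [eventually_ge_atTop 1] with n hn1
    have hn : n ≠ 0 := by omega
    refine ⟨hclower n hn, ?_⟩
    apply multiset_prod_le_one
    · intro x hx
      obtain ⟨ζ, hζ, rfl⟩ := Multiset.mem_map.mp hx
      exact norm_nonneg _
    · intro x hx
      obtain ⟨ζ, hζ, rfl⟩ := Multiset.mem_map.mp hx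
      exact hfac_le_one hn (Multiset.mem_of_mem_filter hζ)
  · -- 1 < ‖α‖
    have h1 : max 1 ‖α‖ = ‖α‖ := max_eq_right hgt.le
    rw [h1]
    have hev : (fun n : ℕ => ((S n).map g).prod ^ ((n:ℝ)⁻¹))
        =ᶠ[atTop] (fun n : ℕ => ((‖α‖ ^ Multiset.card (S n) : ℝ)) ^ ((n:ℝ)⁻¹)) := by
      filter_upwards [eventually_ge_atTop 1] with n hn1
      have hn : n ≠ 0 := by omega
      have hrep : (S n).map g = Multiset.replicate (Multiset.card (S n)) ‖α‖ := by
        rw [Multiset.eq_replicate]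
        refine ⟨by rw [Multiset.card_map], ?_⟩
        intro x hx
        obtain ⟨ζ, hζ, rfl⟩ := Multiset.mem_map.mp hx
        have hζ1 := (hmem hn hζ).2
        show ‖ζ - α‖ = ‖α‖
        rw [norm_sub_eq_max' (by rw [hζ1]; exact ne_of_lt hgt), hζ1,
          max_eq_right hgt.le]
      rw [hrep, Multiset.prod_replicate]
    rw [tendsto_congr' hev]
    exact tendsto_pow_card (lt_trans zero_lt_one hgt) _ hcards


end D
end PadicCR

open PadicCR Real IsUltrametricDist in
/-- `p`-adic asymptotic growth of the (nonvanishing parts of the) cyclic resultants of a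
nonzero integer polynomial: `‖r'_n‖^{1/n} → M_p(f)`. -/
theorem stmt_13 (p : ℕ) [Fact p.Prime] (Ω : Type) [NormedField Ω]
    [Algebra ℚ_[p] Ω] [IsAlgClosure ℚ_[p] Ω]
    (hext : ∀ x : ℚ_[p], ‖algebraMap ℚ_[p] Ω x‖ = ‖x‖)
    (f : Polynomial ℤ) (hf : f ≠ 0) :
    Tendsto (fun n : ℕ => ‖rPrimePadic Ω n f‖ ^ ((n : ℝ)⁻¹)) atTop
      (𝓝 (pAdicMahlerMeasure p Ω f)) := by
  classical
  haveI : CharZero Ω := charZero_of_injective_algebraMap (algebraMap ℚ_[p] Ω).injective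
  haveI : IsAlgClosed Ω := IsAlgClosure.isAlgClosed ℚ_[p]
  have hprime : p.Prime := Fact.out
  have hnormk : ∀ k : ℕ, ‖((k : ℕ) : Ω)‖ = ‖((k : ℕ) : ℚ_[p])‖ := fun k => by
    rw [← map_natCast (algebraMap ℚ_[p] Ω) k, hext]
  haveI hud : IsUltrametricDist Ω :=
    IsUltrametricDist.isUltrametricDist_of_forall_norm_natCast_le_one (fun k => by
      rw [hnormk]
      have h := Padic.norm_int_le_one (p := p) (k : ℤ)
      simpa using h)
  have hpn : ‖((p : ℕ) : Ω)‖ = (p : ℝ)⁻¹ := by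
    rw [hnormk]
    exact Padic.norm_p
  have hnp : ∀ k : ℕ, ¬ p ∣ k → ‖((k : ℕ) : Ω)‖ = 1 := by
    intro k hk
    rw [hnormk]
    have hle : ‖((k : ℕ) : ℚ_[p])‖ ≤ 1 := by
      have h := Padic.norm_int_le_one (p := p) (k : ℤ)
      simpa using h
    have hnlt : ¬ ‖((k : ℕ) : ℚ_[p])‖ < 1 := by
      have hcast : ((k : ℕ) : ℚ_[p]) = ((k : ℤ) : ℚ_[p]) := by push_cast; ring
      rw [hcast, Padic.norm_intCast_lt_one_iff]
      exact_mod_cast hk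
    rcases lt_or_eq_of_le hle with h | h
    · exact absurd h hnlt
    · exact h
  have knorm_ge : ∀ k : ℕ, k ≠ 0 → ((k : ℝ))⁻¹ ≤ ‖((k : ℕ) : Ω)‖ := by
    intro k hk
    set v := k.factorization p with hv
    have hfac : p ^ v * ordCompl[p] k = k := Nat.ordProj_mul_ordCompl_eq_self k p
    have h1 : ‖((k : ℕ) : Ω)‖ = ((p : ℝ)⁻¹) ^ v := by
      rw [← hfac]
      push_cast
      rw [norm_mul, norm_pow, hpn, hnp _ (Nat.not_dvd_ordCompl hprime hk), mul_one]
    rw [h1, inv_pow]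
    have h2 : ((p : ℝ)) ^ v ≤ (k : ℝ) := by
      exact_mod_cast (Nat.ordProj_le p hk)
    have hppos : (0:ℝ) < (p:ℝ) ^ v := by
      have : (0:ℝ) < (p:ℝ) := by exact_mod_cast hprime.pos
      positivity
    exact inv_anti₀ hppos h2
  -- polynomial setup
  set F : Polynomial Ω := f.map (Int.castRingHom Ω) with hFdef
  have hF0 : F ≠ 0 := by
    rw [hFdef, Polynomial.map_ne_zero_iff (f := Int.castRingHom Ω) Int.cast_injective]
    exact hf
  set R := F.roots with hRdef
  set C₀ := F.leadingCoeff with hC₀def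
  have hC₀ : C₀ ≠ 0 := leadingCoeff_ne_zero.mpr hF0
  have hC₀pos : 0 < ‖C₀‖ := norm_pos_iff.mpr hC₀
  have hsplits : F = Polynomial.C C₀ * (R.map (fun α => X - Polynomial.C α)).prod :=
    (IsAlgClosed.splits _).eq_prod_roots
  have heval : ∀ ζ : Ω, eval ζ F = C₀ * (R.map (fun α => ζ - α)).prod := by
    intro ζ
    conv_lhs => rw [hsplits]
    rw [eval_mul, eval_C, eval_multiset_prod, Multiset.map_map]
    refine congrArg _ (congrArg Multiset.prod ?_)
    apply Multiset.map_congr rfl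
    intro x hx
    simp
  unfold pAdicMahlerMeasure
  rw [← hFdef, ← hRdef, ← hC₀def]
  set S : ℕ → Multiset Ω :=
    fun n => (nthRoots n (1:Ω)).filter (fun ζ => ¬ eval ζ F = 0) with hSdef
  have hnorm_r : ∀ n : ℕ, ‖rPrimePadic Ω n f‖
      = ‖C₀‖ ^ (Multiset.card (S n)) *
        (R.map (fun α => ((S n).map (fun ζ => ‖ζ - α‖)).prod)).prod := by
    intro n
    have h1 : rPrimePadic Ω n f
        = ((nthRoots n (1:Ω)).map (fun ζ => if eval ζ F = 0 then 1 else eval ζ F)).prod := by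
      unfold rPrimePadic
      rw [← hFdef]
    rw [h1, norm_multiset_prod', Multiset.map_map]
    have h2 : ((nthRoots n (1:Ω)).map
          ((fun x : Ω => ‖x‖) ∘ (fun ζ => if eval ζ F = 0 then 1 else eval ζ F))).prod
        = ((nthRoots n (1:Ω)).map
            (fun ζ => if eval ζ F = 0 then (1:ℝ) else ‖eval ζ F‖)).prod := by
      congr 1
      apply Multiset.map_congr rfl
      intro ζ _
      by_cases h : eval ζ F = 0 <;> simp [h]
    rw [h2, prod_map_ite]
    have h3 : ((S n).map (fun ζ => ‖eval ζ F‖)).prod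
        = ((S n).map (fun ζ => ‖C₀‖ * ((R.map (fun α => ‖ζ - α‖)).prod))).prod := by
      congr 1
      apply Multiset.map_congr rfl
      intro ζ _
      rw [heval ζ, norm_mul, norm_multiset_prod', Multiset.map_map]
      rfl
    rw [h3, Multiset.prod_map_mul, Multiset.map_const', Multiset.prod_replicate,
      Multiset.prod_map_prod_map]
  have hcards : ∀ᶠ n : ℕ in atTop,
      Multiset.card (S n) ≤ n ∧ n ≤ Multiset.card (S n) + R.toFinset.card := by
    filter_upwards [eventually_ge_atTop 1] with n hn1
    have hn : n ≠ 0 := by omega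
    constructor
    · calc Multiset.card (S n) ≤ Multiset.card (nthRoots n (1:Ω)) :=
            Multiset.card_le_card (Multiset.filter_le _ _)
        _ = n := T_card hn
    · have hE : Multiset.card ((nthRoots n (1:Ω)).filter (fun ζ => eval ζ F = 0))
          ≤ R.toFinset.card := by
        have hnodupE : ((nthRoots n (1:Ω)).filter (fun ζ => eval ζ F = 0)).Nodup :=
          (T_nodup hn).filter _
        have hsub : ((nthRoots n (1:Ω)).filter (fun ζ => eval ζ F = 0)).toFinset
            ⊆ R.toFinset := by
          intro x hx
          rw [Multiset.mem_toFinset] at hx ⊢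
          have hx0 : eval x F = 0 := (Multiset.mem_filter.mp hx).2
          exact Polynomial.mem_roots'.mpr ⟨hF0, hx0⟩
        calc Multiset.card ((nthRoots n (1:Ω)).filter (fun ζ => eval ζ F = 0))
            = ((nthRoots n (1:Ω)).filter (fun ζ => eval ζ F = 0)).toFinset.card :=
              (Multiset.toFinset_card_of_nodup hnodupE).symm
          _ ≤ _ := Finset.card_le_card hsub
      have hsum := filter_not_card (nthRoots n (1:Ω)) (fun ζ => eval ζ F = 0)
      rw [T_card hn] at hsum
      have hScard : Multiset.card (S n)
          = Multiset.card ((nthRoots n (1:Ω)).filter (fun a => ¬ eval a F = 0)) := rfl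
      omega
  have hev : (fun n : ℕ => ‖rPrimePadic Ω n f‖ ^ ((n:ℝ)⁻¹)) =ᶠ[atTop]
      (fun n : ℕ => (‖C₀‖ ^ Multiset.card (S n)) ^ ((n:ℝ)⁻¹) *
        (R.map (fun α => (((S n).map (fun ζ => ‖ζ - α‖)).prod) ^ ((n:ℝ)⁻¹))).prod) := by
    filter_upwards with n
    rw [hnorm_r n]
    rw [Real.mul_rpow (by positivity) (multiset_prod_nonneg _ (fun x hx => by
      obtain ⟨α, hα, rfl⟩ := Multiset.mem_map.mp hx
      exact multiset_prod_nonneg _ (fun y hy => by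
        obtain ⟨ζ, hζ, rfl⟩ := Multiset.mem_map.mp hy
        exact norm_nonneg _)))]
    rw [multiset_prod_rpow R _ (fun α _ => multiset_prod_nonneg _ (fun y hy => by
      obtain ⟨ζ, hζ, rfl⟩ := Multiset.mem_map.mp hy
      exact norm_nonneg _)) _]
  rw [tendsto_congr' hev]
  exact (tendsto_pow_card hC₀pos _ hcards).mul
    (tendsto_multiset_prod R _ _ (fun α hα =>
      per_root_tendsto hprime hpn hnp knorm_ge F hF0 hα))
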